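/- For every real t > 0, (t − 1)·( 2·(1 − t) + (1 + t)·log t ) ≥ 0, with equality at t = 1. -/

import Mathlib

private noncomputable def gN (t : ℝ) : ℝ := (1 + t) * Real.log t - 2 * (t - 1)

private lemma gN_hasDeriv {t : ℝ} (ht : 0 < t) :
    HasDerivAt gN (Real.log t + 1 / t - 1) t := by
  have h1 : HasDerivAt (fun t : ℝ => (1 + t) * Real.log t)
      (1 * Real.log t + (1 + t) * t⁻¹) t := by
    exact (hasDerivAt_id t).const_add 1 |>.mul (Real.hasDerivAt_log ht.ne')
  have h2 : HasDerivAt (fun t : ℝ => 2 * (t - 1)) 2 t := by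
    simpa using ((hasDerivAt_id t).sub_const 1).const_mul 2
  have := h1.sub h2
  refine this.congr_deriv ?_
  rw [one_div, add_mul, mul_inv_cancel₀ ht.ne']
  ring

private lemma gN_mono : MonotoneOn gN (Set.Ioi (0 : ℝ)) := by
  have hconv : Convex ℝ (Set.Ioi (0 : ℝ)) := convex_Ioi 0
  apply monotoneOn_of_deriv_nonneg hconv
  · apply ContinuousOn.sub
    · exact (continuous_const.add continuous_id).continuousOn.mul
        (Real.continuousOn_log.mono (by intro x hx; exact ne_of_gt hx))
    · exact (continuous_const.mul (continuous_id.sub continuous_const)).continuousOn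
  · intro x hx
    rw [interior_Ioi] at hx
    exact (gN_hasDeriv hx).differentiableAt.differentiableWithinAt
  · intro x hx
    rw [interior_Ioi] at hx
    rw [(gN_hasDeriv hx).deriv]
    have h := Real.log_le_sub_one_of_pos (x := 1 / x) (by exact div_pos one_pos hx)
    rw [Real.log_div one_ne_zero (ne_of_gt hx), Real.log_one] at h
    linarith

/-- The inequality N(t) = (t−1)(2(1−t)+(1+t)·log t) ≥ 0 for t > 0, with equality
at t = 1 (used to show monotonicity of x*(p,u) in p). -/
theorem N_nonneg :
    (∀ t : ℝ, 0 < t → 0 ≤ (t - 1) * (2 * (1 - t) + (1 + t) * Real.log t)) ∧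
    ((1 - 1 : ℝ) * (2 * (1 - 1) + (1 + 1) * Real.log 1) = 0) := by
  constructor
  · intro t ht
    have hg1 : gN 1 = 0 := by simp [gN]
    have heq : 2 * (1 - t) + (1 + t) * Real.log t = gN t := by
      unfold gN; ring
    rw [heq]
    rcases le_total 1 t with h | h
    · have := gN_mono (Set.mem_Ioi.mpr one_pos) (Set.mem_Ioi.mpr ht) h
      rw [hg1] at this
      exact mul_nonneg (by linarith) this
    · have := gN_mono (Set.mem_Ioi.mpr ht) (Set.mem_Ioi.mpr one_pos) h
      rw [hg1] at this
      nlinarith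
  · simp
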